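/- Let H be a symmetric Bush-type Hadamard matrix of order 4n², viewed as a (2n)×(2n) array of 2n×2n blocks H_{ij}. Then the matrix A = (1/2)(J - H), where J is the all-ones matrix of order 4n², is a symmetric matrix with entries in {0,1}, has zero diagonal, and satisfies A² = n² • I + (n² - n) • J. -/

import Mathlib

open Matrix

theorem bush_to_adjacency (n : ℕ)
    (H : Matrix (Fin (2 * n) × Fin (2 * n)) (Fin (2 * n) × Fin (2 * n)) ℚ)
    (hentries : ∀ x y, H x y = 1 ∨ H x y = -1)
    (hHad : H * H.transpose =
      ((4 * n ^ 2 : ℕ) : ℚ) • (1 : Matrix (Fin (2 * n) × Fin (2 * n)) (Fin (2 * n) × Fin (2 * n)) ℚ))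
    (hsymm : H.transpose = H)
    (hdiag : ∀ i a b, H (i, a) (i, b) = 1)
    (hrow : ∀ i j, i ≠ j → ∀ a, ∑ b, H (i, a) (j, b) = 0)
    (hcol : ∀ i j, i ≠ j → ∀ b, ∑ a, H (i, a) (j, b) = 0) :
    let J : Matrix (Fin (2 * n) × Fin (2 * n)) (Fin (2 * n) × Fin (2 * n)) ℚ := fun _ _ => 1
    let A := (1 / 2 : ℚ) • (J - H)
    A.transpose = A ∧
    (∀ x y, A x y = 0 ∨ A x y = 1) ∧
    (∀ x, A x x = 0) ∧
    A * A = ((n ^ 2 : ℕ) : ℚ) • (1 : Matrix (Fin (2 * n) × Fin (2 * n)) (Fin (2 * n) × Fin (2 * n)) ℚ)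
      + ((n ^ 2 : ℚ) - (n : ℚ)) • J := by
  intro J A
  have hJ : ∀ x y, J x y = 1 := fun _ _ => rfl
  have hHJ : H * J = ((2 * n : ℕ) : ℚ) • J := by
    ext ⟨i, a⟩ ⟨j, b⟩
    simp only [Matrix.mul_apply, Matrix.smul_apply, hJ, mul_one, smul_eq_mul]
    rw [Fintype.sum_prod_type]
    rw [Finset.sum_eq_single i]
    · simp [hdiag i a]
    · intro k _ hk
      exact hrow i k (Ne.symm hk) a
    · simp
  have hJH : J * H = ((2 * n : ℕ) : ℚ) • J := by
    ext ⟨i, a⟩ ⟨j, b⟩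
    simp only [Matrix.mul_apply, Matrix.smul_apply, hJ, one_mul, smul_eq_mul]
    rw [Fintype.sum_prod_type]
    rw [Finset.sum_eq_single j]
    · simp [hdiag j]
    · intro k _ hk
      exact hcol k j hk b
    · simp
  have hJJ : J * J = ((4 * n ^ 2 : ℕ) : ℚ) • J := by
    ext x y
    simp only [Matrix.mul_apply, Matrix.smul_apply, hJ, one_mul, smul_eq_mul, mul_one]
    simp [Finset.card_univ]
    ring
  have hHH : H * H = ((4 * n ^ 2 : ℕ) : ℚ) • (1 : Matrix (Fin (2 * n) × Fin (2 * n)) (Fin (2 * n) × Fin (2 * n)) ℚ) := by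
    rw [hsymm] at hHad
    exact hHad
  refine ⟨?_, ?_, ?_, ?_⟩
  · ext x y
    have h := congrFun (congrFun hsymm x) y
    simp only [Matrix.transpose_apply] at h
    simp [A, hJ, Matrix.transpose_apply, h]
  · intro x y
    rcases hentries x y with h | h
    · left; simp [A, hJ, Matrix.smul_apply, Matrix.sub_apply, h]
    · right; simp [A, hJ, Matrix.smul_apply, Matrix.sub_apply, h]; norm_num
  · intro x
    obtain ⟨i, a⟩ := x
    simp [A, hJ, Matrix.smul_apply, Matrix.sub_apply, hdiag i a a]
  · have expand : A * A = ((1/2 : ℚ) * (1/2 : ℚ)) •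
        (J * J - J * H - (H * J - H * H)) := by
      simp only [A, Matrix.smul_mul, Matrix.mul_smul, smul_smul,
        Matrix.sub_mul, Matrix.mul_sub, smul_sub]
      abel
    rw [expand, hJJ, hJH, hHJ, hHH]
    ext x y
    simp only [Matrix.smul_apply, Matrix.sub_apply, Matrix.add_apply, Matrix.one_apply,
      hJ, smul_eq_mul]
    by_cases hxy : x = y <;> simp [hxy] <;> ring
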